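/- arXiv:2107.03499 — 2 statements merged into one kernel-verified Lean document; each statement's English description precedes it below -/
import Mathlib

section
/- Let m ≥ 2 be an integer, let p₁ : ℝ → ℝ be 2π-periodic and C², and let u₁ : ℝ → ℝ be 2π-periodic and continuous. Write p₁⁺(t) := p₁(t + 2π/m), p₁⁻(t) := p₁(t − 2π/m), and similarly for u₁. Then the function t ↦ sin(π/m) ( (p₁')⁺(t) + (p₁')⁻(t) + 2 p₁'(t) + u₁⁺(t) + u₁⁻(t) − 2 u₁(t) ) + cos(π/m) ( p₁⁻(t) − p₁⁺(t) ) vanishes identically on ℝ if and only if for every k ∈ ℤ the Fourier coefficients satisfy −2 i sin(π/m) sin²(πk/m) · û₁(k) = ( 2 k sin(π/m) cos²(πk/m) − cos(π/m) sin(2πk/m) ) · p̂₁(k). -/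
set_option maxHeartbeats 1000000

open MeasureTheory intervalIntegral


open Real

/-- The `k`-th Fourier coefficient of a 2π-periodic function `f`,
`f̂(k) = (1/(2π)) ∫₀^{2π} f(t) e^{−ikt} dt`. -/
noncomputable def fourierCoef (f : ℝ → ℝ) (k : ℤ) : ℂ :=
  (1 / (2 * Real.pi)) * ∫ t in (0:ℝ)..(2 * Real.pi),
    (f t : ℂ) * Complex.exp (-Complex.I * k * t)

lemma two_pi_pos' : (0:ℝ) < 2 * π := by positivity

lemma fourierCoef_add {f g : ℝ → ℝ} (hf : Continuous f) (hg : Continuous g) (k : ℤ) :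
    fourierCoef (fun t => f t + g t) k = fourierCoef f k + fourierCoef g k := by
  unfold fourierCoef
  rw [← mul_add, ← intervalIntegral.integral_add]
  · congr 1
    apply intervalIntegral.integral_congr
    intro x _
    push_cast
    ring
  · exact ((Complex.continuous_ofReal.comp hf).mul (by fun_prop)).intervalIntegrable _ _
  · exact ((Complex.continuous_ofReal.comp hg).mul (by fun_prop)).intervalIntegrable _ _

lemma fourierCoef_sub {f g : ℝ → ℝ} (hf : Continuous f) (hg : Continuous g) (k : ℤ) :
    fourierCoef (fun t => f t - g t) k = fourierCoef f k - fourierCoef g k := by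
  unfold fourierCoef
  rw [← mul_sub, ← intervalIntegral.integral_sub]
  · congr 1
    apply intervalIntegral.integral_congr
    intro x _
    push_cast
    ring
  · exact ((Complex.continuous_ofReal.comp hf).mul (by fun_prop)).intervalIntegrable _ _
  · exact ((Complex.continuous_ofReal.comp hg).mul (by fun_prop)).intervalIntegrable _ _

lemma fourierCoef_const_mul (c : ℝ) (f : ℝ → ℝ) (k : ℤ) :
    fourierCoef (fun t => c * f t) k = (c : ℂ) * fourierCoef f k := by
  unfold fourierCoef
  have : (∫ t in (0:ℝ)..(2*π), ((c * f t : ℝ) : ℂ) * Complex.exp (-Complex.I * k * t))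
      = (c:ℂ) * ∫ t in (0:ℝ)..(2*π), (f t : ℂ) * Complex.exp (-Complex.I * k * t) := by
    rw [← intervalIntegral.integral_const_mul]
    apply intervalIntegral.integral_congr
    intro x _
    push_cast
    ring
  rw [this]
  ring

lemma fourierCoef_shift {f : ℝ → ℝ} (hf : Continuous f) (hper : ∀ t, f (t + 2 * π) = f t)
    (a : ℝ) (k : ℤ) :
    fourierCoef (fun t => f (t + a)) k = Complex.exp (Complex.I * k * a) * fourierCoef f k := by
  unfold fourierCoef
  set g : ℝ → ℂ := fun s => (f s : ℂ) * Complex.exp (-Complex.I * k * s) with hg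
  have hgper : Function.Periodic g (2 * π) := by
    intro s
    simp only [hg, hper s]
    congr 1
    rw [show -Complex.I * k * ((s : ℝ) + 2 * π : ℝ) = -Complex.I * k * s + (-k : ℤ) * (2 * π * Complex.I) by push_cast; ring,
      Complex.exp_add, Complex.exp_int_mul_two_pi_mul_I, mul_one]
  have hpt : ∀ t : ℝ, ((f (t + a) : ℂ)) * Complex.exp (-Complex.I * k * t)
      = Complex.exp (Complex.I * k * a) * g (t + a) := by
    intro t
    simp only [hg]
    rw [mul_left_comm, ← Complex.exp_add]
    congr 2
    push_cast
    ring
  rw [intervalIntegral.integral_congr (fun x _ => hpt x), intervalIntegral.integral_const_mul,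
    intervalIntegral.integral_comp_add_right g a, zero_add, show 2 * π + a = a + (2*π) by ring,
    hgper.intervalIntegral_add_eq a 0, zero_add]
  ring

lemma fourierCoef_eq_On (f : ℝ → ℝ) (k : ℤ) :
    fourierCoef f k = fourierCoeffOn two_pi_pos' (fun t => (f t : ℂ)) k := by
  rw [fourierCoeffOn_eq_integral, fourierCoef]
  rw [sub_zero, Complex.real_smul]
  push_cast
  congr 1
  apply intervalIntegral.integral_congr
  intro x _
  simp only [fourier_coe_apply, smul_eq_mul, mul_comm]
  congr 1
  have : ((π:ℂ) * 2) ≠ 0 := by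
    simp [Real.pi_ne_zero]
  push_cast
  congr 1
  rw [eq_div_iff this]
  ring

lemma fourierCoef_deriv {p : ℝ → ℝ} (hp : ContDiff ℝ 2 p) (hper : ∀ t, p (t + 2 * π) = p t)
    (k : ℤ) : fourierCoef (deriv p) k = Complex.I * k * fourierCoef p k := by
  have hdp : Continuous (deriv p) := hp.continuous_deriv one_le_two
  have hdiff : Differentiable ℝ p := hp.differentiable two_ne_zero
  rcases eq_or_ne k 0 with rfl | hk
  · simp only [Int.cast_zero, mul_zero, zero_mul]
    unfold fourierCoef
    have : ∀ x ∈ Set.uIcc (0:ℝ) (2*π), (((deriv p x : ℝ) : ℂ)) * Complex.exp (-Complex.I * (0:ℤ) * x)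
        = (((deriv p x : ℝ) : ℂ)) := by
      intro x _; simp
    rw [intervalIntegral.integral_congr this, intervalIntegral.integral_ofReal,
      intervalIntegral.integral_deriv_eq_sub (fun x _ => hdiff x)
        (hdp.intervalIntegrable _ _)]
    rw [show p (2*π) = p 0 by rw [← hper 0, zero_add]]
    simp
  · have hd : ∀ x ∈ Set.uIcc (0:ℝ) (2*π),
        HasDerivAt (fun t : ℝ => (p t : ℂ)) (((deriv p x : ℝ) : ℂ)) x :=
      fun x _ => ((hdiff x).hasDerivAt).ofReal_comp
    have hint : IntervalIntegrable (fun t : ℝ => ((deriv p t : ℝ) : ℂ)) volume 0 (2*π) :=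
      (Complex.continuous_ofReal.comp hdp).intervalIntegrable _ _
    have h2 := fourierCoeffOn_of_hasDerivAt two_pi_pos' hk hd hint
    have hb : ((p (2*π) : ℝ) : ℂ) - ((p 0 : ℝ) : ℂ) = 0 := by
      rw [show p (2*π) = p 0 by rw [← hper 0, zero_add]]; ring
    rw [hb, mul_zero, zero_sub] at h2
    rw [fourierCoef_eq_On, fourierCoef_eq_On, h2]
    have hπ : ((π:ℝ):ℂ) ≠ 0 := Complex.ofReal_ne_zero.mpr Real.pi_ne_zero
    have hkc : (k : ℂ) ≠ 0 := Int.cast_ne_zero.mpr hk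
    push_cast
    field_simp
    ring

lemma aux_unique {T : ℝ} [hT : Fact (0 < T)] (g : C(AddCircle T, ℂ))
    (h : ∀ k : ℤ, fourierCoeff (⇑g) k = 0) : ∀ x, g x = 0 := by
  have h1 : ContinuousMap.toLp 2 AddCircle.haarAddCircle ℂ g
      = ContinuousMap.toLp 2 AddCircle.haarAddCircle ℂ 0 := by
    rw [map_zero]
    apply fourierBasis.repr.injective
    ext k
    rw [fourierBasis_repr, fourierCoeff_toLp]
    simp [h k]
  have h2 := ContinuousMap.toLp_injective (𝕜 := ℂ) AddCircle.haarAddCircle h1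
  intro x
  exact congrFun (congrArg _ h2) x

lemma vanish_iff {F : ℝ → ℝ} (hF : Continuous F) (hper : ∀ t, F (t + 2 * π) = F t) :
    (∀ t, F t = 0) ↔ ∀ k, fourierCoef F k = 0 := by
  constructor
  · intro h k
    simp [fourierCoef, h]
  · intro h t
    haveI : Fact ((0:ℝ) < 2 * π) := ⟨two_pi_pos'⟩
    set Fc : ℝ → ℂ := fun s => (F s : ℂ) with hFcdef
    have hFc : Continuous Fc := Complex.continuous_ofReal.comp hF
    have hb : Fc 0 = Fc (0 + 2 * π) := by simp only [hFcdef, hper 0]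
    have hG : Continuous (AddCircle.liftIco (2 * π) 0 Fc) :=
      AddCircle.liftIco_continuous hb hFc.continuousOn
    have hcoef : ∀ k : ℤ, fourierCoeff (AddCircle.liftIco (2 * π) 0 Fc) k = 0 := by
      intro k
      rw [fourierCoeff_liftIco_eq]
      have h2 := h k
      rw [fourierCoef_eq_On] at h2
      convert h2 using 2
      norm_num
      · rfl
      · ring
    have hzero := aux_unique ⟨_, hG⟩ hcoef
    have hmem := toIcoMod_mem_Ico two_pi_pos' 0 t
    have h1 : Fc (toIcoMod two_pi_pos' 0 t) = 0 := by
      have := hzero ((toIcoMod two_pi_pos' 0 t : ℝ) : AddCircle (2 * π))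
      rwa [ContinuousMap.coe_mk, AddCircle.liftIco_coe_apply hmem] at this
    have hper' : Function.Periodic F (2 * π) := hper
    have h2 : F (toIcoMod two_pi_pos' 0 t) = F t := by
      rw [toIcoMod]
      exact hper'.sub_zsmul_eq _
    have : F (toIcoMod two_pi_pos' 0 t) = 0 := by
      simp only [hFcdef] at h1
      exact_mod_cast h1
    rw [h2] at this
    exact this

lemma coef_comb (p₁ u₁ : ℝ → ℝ) (hq : Continuous (deriv p₁)) (hpc : Continuous p₁)
    (hu : Continuous u₁) (a s c : ℝ) (k : ℤ) :
    fourierCoef (fun t => s * (deriv p₁ (t + a) + deriv p₁ (t - a) + 2 * deriv p₁ t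
        + u₁ (t + a) + u₁ (t - a) - 2 * u₁ t) + c * (p₁ (t - a) - p₁ (t + a))) k
    = (s : ℂ) * (fourierCoef (fun t => deriv p₁ (t + a)) k
        + fourierCoef (fun t => deriv p₁ (t - a)) k
        + 2 * fourierCoef (deriv p₁) k
        + fourierCoef (fun t => u₁ (t + a)) k
        + fourierCoef (fun t => u₁ (t - a)) k
        - 2 * fourierCoef u₁ k)
      + (c : ℂ) * (fourierCoef (fun t => p₁ (t - a)) k
        - fourierCoef (fun t => p₁ (t + a)) k) := by
  set F8 : Fin 8 → ℝ → ℝ := ![fun t => deriv p₁ (t + a), fun t => deriv p₁ (t - a),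
    fun t => deriv p₁ t, fun t => u₁ (t + a), fun t => u₁ (t - a), u₁,
    fun t => p₁ (t - a), fun t => p₁ (t + a)] with hF8
  set co : Fin 8 → ℂ := ![(s:ℂ), s, 2*s, s, s, -(2*s), c, -c] with hco
  have hcontF : ∀ i : Fin 8, Continuous (F8 i) := by
    simp only [hF8, Fin.forall_fin_succ, Matrix.cons_val_zero, Matrix.cons_val_succ]
    exact ⟨by fun_prop, by fun_prop, by fun_prop, by fun_prop, by fun_prop, by fun_prop,
      by fun_prop, by fun_prop, fun i => i.elim0⟩
  have hsplit : ∀ t ∈ Set.uIcc (0:ℝ) (2*π),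
      ((s * (deriv p₁ (t + a) + deriv p₁ (t - a) + 2 * deriv p₁ t
        + u₁ (t + a) + u₁ (t - a) - 2 * u₁ t) + c * (p₁ (t - a) - p₁ (t + a)) : ℝ) : ℂ)
        * Complex.exp (-Complex.I * k * t)
      = ∑ i : Fin 8, co i * (((F8 i t : ℝ) : ℂ) * Complex.exp (-Complex.I * k * t)) := by
    intro t _
    simp only [Fin.sum_univ_succ, Finset.univ_eq_empty, Finset.sum_empty, hF8, hco,
      Matrix.cons_val_zero, Matrix.cons_val_succ]
    push_cast
    ring
  unfold fourierCoef
  have hInt : ∀ i ∈ Finset.univ, IntervalIntegrable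
      (fun x : ℝ => co i * (((F8 i x : ℝ) : ℂ) * Complex.exp (-Complex.I * k * x)))
      volume 0 (2*π) :=
    fun i _ => (continuous_const.mul ((Complex.continuous_ofReal.comp (hcontF i)).mul
      (by fun_prop))).intervalIntegrable _ _
  rw [intervalIntegral.integral_congr hsplit, intervalIntegral.integral_finset_sum hInt]
  simp only [intervalIntegral.integral_const_mul, Fin.sum_univ_succ, Finset.univ_eq_empty,
    Finset.sum_empty, hF8, hco, Matrix.cons_val_zero, Matrix.cons_val_succ]
  ring


lemma iff_aux {A L R : ℂ} (h : A = -2 * Complex.I * (L - R)) : A = 0 ↔ L = R := by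
  rw [h]
  constructor
  · intro h2
    rcases mul_eq_zero.mp h2 with h3 | h3
    · exfalso
      have : (-2 * Complex.I : ℂ) ≠ 0 := by
        simp [Complex.I_ne_zero]
      exact this h3
    · exact sub_eq_zero.mp h3
  · intro h2
    rw [h2, sub_self, mul_zero]

/-- The first-order term `E₁₀` of the expansion of the billiard error function
vanishes identically if and only if, for every Fourier mode `k`,
`−2i sin(π/m) sin²(πk/m) û₁(k) = (2k sin(π/m) cos²(πk/m) − cos(π/m) sin(2πk/m)) p̂₁(k)`. -/
theorem stmt_5 (m : ℕ) (hm : 2 ≤ m) (p₁ u₁ : ℝ → ℝ)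
    (hp : ContDiff ℝ 2 p₁) (hpper : ∀ t, p₁ (t + 2 * π) = p₁ t)
    (hu : Continuous u₁) (huper : ∀ t, u₁ (t + 2 * π) = u₁ t) :
    (∀ t : ℝ,
        Real.sin (π / m) *
            (deriv p₁ (t + 2 * π / m) + deriv p₁ (t - 2 * π / m) + 2 * deriv p₁ t
              + u₁ (t + 2 * π / m) + u₁ (t - 2 * π / m) - 2 * u₁ t)
          + Real.cos (π / m) * (p₁ (t - 2 * π / m) - p₁ (t + 2 * π / m)) = 0)
    ↔ (∀ k : ℤ,
        -2 * Complex.I * (Real.sin (π / m) : ℂ) * (Real.sin (π * k / m) : ℂ) ^ 2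
            * fourierCoef u₁ k
          = ((2 * k * Real.sin (π / m) * Real.cos (π * k / m) ^ 2
              - Real.cos (π / m) * Real.sin (2 * π * k / m) : ℝ) : ℂ)
            * fourierCoef p₁ k) := by
  have hq : Continuous (deriv p₁) := hp.continuous_deriv one_le_two
  have hpc : Continuous p₁ := hp.continuous
  have hqper : ∀ t, deriv p₁ (t + 2 * π) = deriv p₁ t := by
    intro t
    rw [← deriv_comp_add_const]
    congr 1
    funext s
    exact hpper s
  have hFcont : Continuous (fun t : ℝ =>
      Real.sin (π / m) *
          (deriv p₁ (t + 2 * π / m) + deriv p₁ (t - 2 * π / m) + 2 * deriv p₁ t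
            + u₁ (t + 2 * π / m) + u₁ (t - 2 * π / m) - 2 * u₁ t)
        + Real.cos (π / m) * (p₁ (t - 2 * π / m) - p₁ (t + 2 * π / m))) := by
    fun_prop
  have hFper : ∀ t : ℝ,
      (Real.sin (π / m) *
          (deriv p₁ (t + 2 * π + 2 * π / m) + deriv p₁ (t + 2 * π - 2 * π / m)
            + 2 * deriv p₁ (t + 2 * π)
            + u₁ (t + 2 * π + 2 * π / m) + u₁ (t + 2 * π - 2 * π / m) - 2 * u₁ (t + 2 * π))
        + Real.cos (π / m) * (p₁ (t + 2 * π - 2 * π / m) - p₁ (t + 2 * π + 2 * π / m)))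
      = (Real.sin (π / m) *
          (deriv p₁ (t + 2 * π / m) + deriv p₁ (t - 2 * π / m) + 2 * deriv p₁ t
            + u₁ (t + 2 * π / m) + u₁ (t - 2 * π / m) - 2 * u₁ t)
        + Real.cos (π / m) * (p₁ (t - 2 * π / m) - p₁ (t + 2 * π / m))) := by
    intro t
    rw [show t + 2 * π + 2 * π / (m:ℝ) = (t + 2 * π / (m:ℝ)) + 2 * π by ring,
      show t + 2 * π - 2 * π / (m:ℝ) = (t - 2 * π / (m:ℝ)) + 2 * π by ring,
      hpper, hpper, hqper, hqper, hqper, huper, huper, huper]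
  refine Iff.trans (vanish_iff hFcont hFper) ?_
  refine forall_congr' fun k => ?_
  rw [coef_comb p₁ u₁ hq hpc hu (2 * π / (m:ℝ)) (Real.sin (π / m)) (Real.cos (π / m)) k]
  rw [show (fun t : ℝ => deriv p₁ (t - 2 * π / (m:ℝ))) = (fun t : ℝ => deriv p₁ (t + -(2 * π / (m:ℝ)))) from
      funext fun t => by rw [sub_eq_add_neg],
    show (fun t : ℝ => u₁ (t - 2 * π / (m:ℝ))) = (fun t : ℝ => u₁ (t + -(2 * π / (m:ℝ)))) from
      funext fun t => by rw [sub_eq_add_neg],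
    show (fun t : ℝ => p₁ (t - 2 * π / (m:ℝ))) = (fun t : ℝ => p₁ (t + -(2 * π / (m:ℝ)))) from
      funext fun t => by rw [sub_eq_add_neg]]
  rw [fourierCoef_shift hq hqper (2 * π / (m:ℝ)) k,
    fourierCoef_shift hq hqper (-(2 * π / (m:ℝ))) k,
    fourierCoef_shift hu huper (2 * π / (m:ℝ)) k,
    fourierCoef_shift hu huper (-(2 * π / (m:ℝ))) k,
    fourierCoef_shift hpc hpper (2 * π / (m:ℝ)) k,
    fourierCoef_shift hpc hpper (-(2 * π / (m:ℝ))) k,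
    fourierCoef_deriv hp hpper k]
  apply iff_aux
  have hEp : Complex.exp (Complex.I * (k:ℂ) * ((2 * π / (m:ℝ) : ℝ) : ℂ))
      = ((Real.cos (2 * π * k / m) : ℝ) : ℂ) + ((Real.sin (2 * π * k / m) : ℝ) : ℂ) * Complex.I := by
    rw [show Complex.I * (k:ℂ) * ((2 * π / (m:ℝ) : ℝ) : ℂ)
        = ((2 * π * (k:ℝ) / (m:ℝ) : ℝ) : ℂ) * Complex.I by push_cast; ring,
      Complex.exp_mul_I, ← Complex.ofReal_cos, ← Complex.ofReal_sin]
  have hEm : Complex.exp (Complex.I * (k:ℂ) * ((-(2 * π / (m:ℝ)) : ℝ) : ℂ))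
      = ((Real.cos (2 * π * k / m) : ℝ) : ℂ) - ((Real.sin (2 * π * k / m) : ℝ) : ℂ) * Complex.I := by
    rw [show Complex.I * (k:ℂ) * ((-(2 * π / (m:ℝ)) : ℝ) : ℂ)
        = ((-(2 * π * (k:ℝ) / (m:ℝ)) : ℝ) : ℂ) * Complex.I by push_cast; ring,
      Complex.exp_mul_I, ← Complex.ofReal_cos, ← Complex.ofReal_sin, Real.cos_neg, Real.sin_neg]
    push_cast
    ring
  rw [hEp, hEm]
  push_cast
  have hc2 : Complex.cos (2 * (π:ℂ) * (k:ℂ) / (m:ℂ)) = 2 * Complex.cos ((π:ℂ) * (k:ℂ) / (m:ℂ)) ^ 2 - 1 := by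
    have h := Complex.cos_two_mul ((π:ℂ) * (k:ℂ) / (m:ℂ))
    rw [show 2 * ((π:ℂ) * (k:ℂ) / (m:ℂ)) = 2 * (π:ℂ) * (k:ℂ) / (m:ℂ) by ring] at h
    exact h
  have hs2 : Complex.sin ((π:ℂ) * (k:ℂ) / (m:ℂ)) ^ 2 = 1 - Complex.cos ((π:ℂ) * (k:ℂ) / (m:ℂ)) ^ 2 :=
    Complex.sin_sq _
  rw [hc2, hs2]
  linear_combination (-4 * Complex.sin ((π:ℂ) / (m:ℂ))
    * (1 - Complex.cos ((π:ℂ) * (k:ℂ) / (m:ℂ)) ^ 2) * fourierCoef u₁ k) * Complex.I_sq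
end

section
/- Let m ≥ 1 be an integer and let r ∈ {1, …, 4m+1} with r ≠ 2m+1. Define ω := e^{2πi r/(2m+1)}, c_{m,r} := −4(2m+1) csc(π/(2m+1)) / (ω − 1)², and for n, k ∈ ℤ, 𝒫^m_r(n,k) := c_{m,r} · ( (ω − 1) cos(π/(2m+1)) − i (ω + 1) sin(π/(2m+1)) (k(4m+2) + r) ) · ( (ω + 1) sin(π/(2m+1)) ((4m+2)(n − k) − r) − i (ω − 1) cos(π/(2m+1)) ). Then 𝒫^m_r splits as a product of two linear factors: 𝒫^m_r(n,k) = −16 i · (2m+1)³ sin(π/(2m+1)) cot²(πr/(2m+1)) · (k − c**_{m,r}) · (n − k + c**_{m,r}), where c**_{m,r} := ( cot(π/(2m+1)) tan(πr/(2m+1)) − r ) / (4m + 2). -/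
open Real

set_option maxHeartbeats 1000000 in
/-- Splitting of the polynomial `𝒫^m_r(n,k)` from the cohomological equation of
second-order preservation of the `1/(2m+1)`-rational caustic into a product of
two linear factors:
`𝒫^m_r(n,k) = −16i (2m+1)³ sin(π/(2m+1)) cot²(πr/(2m+1)) (k − c**)(n − k + c**)`. -/
theorem stmt_11 (m r : ℕ) (hm : 1 ≤ m) (hr1 : 1 ≤ r) (hr2 : r ≤ 4 * m + 1)
    (hr3 : r ≠ 2 * m + 1)
    (ω : ℂ) (hω : ω = Complex.exp (2 * Real.pi * Complex.I * r / (2 * m + 1)))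
    (c : ℂ) (hc : c = -4 * (2 * (m : ℂ) + 1)
        * ((Real.sin (π / (2 * m + 1)) : ℂ))⁻¹ / (ω - 1) ^ 2)
    (cs : ℝ) (hcs : cs = (Real.cot (π / (2 * m + 1)) * Real.tan (π * r / (2 * m + 1)) - r)
        / (4 * m + 2)) :
    ∀ n k : ℤ,
      c * ((ω - 1) * (Real.cos (π / (2 * m + 1)) : ℂ)
            - Complex.I * (ω + 1) * (Real.sin (π / (2 * m + 1)) : ℂ)
              * ((k : ℂ) * (4 * m + 2) + r))
        * ((ω + 1) * (Real.sin (π / (2 * m + 1)) : ℂ)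
              * ((4 * m + 2) * ((n : ℂ) - k) - r)
            - Complex.I * (ω - 1) * (Real.cos (π / (2 * m + 1)) : ℂ))
      = -16 * Complex.I * (2 * (m : ℂ) + 1) ^ 3
          * (Real.sin (π / (2 * m + 1)) : ℂ)
          * (Real.cot (π * r / (2 * m + 1)) : ℂ) ^ 2
          * ((k : ℂ) - (cs : ℂ)) * ((n : ℂ) - (k : ℂ) + (cs : ℂ)) := by
  intro n k
  have hpi := Real.pi_pos
  have hm1 : (1:ℝ) ≤ m := by exact_mod_cast hm
  have hden : (0:ℝ) < 2 * (m:ℝ) + 1 := by linarith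
  have hr1' : (1:ℝ) ≤ r := by exact_mod_cast hr1
  have hr2' : (r:ℝ) ≤ 4 * m + 1 := by exact_mod_cast hr2
  set a : ℝ := π / (2 * (m:ℝ) + 1) with ha
  set b : ℝ := π * (r:ℝ) / (2 * (m:ℝ) + 1) with hb
  have hsa : Real.sin a ≠ 0 := by
    apply ne_of_gt
    apply Real.sin_pos_of_pos_of_lt_pi
    · rw [ha]; positivity
    · rw [ha, div_lt_iff₀ hden]; nlinarith
  have hsb : Real.sin b ≠ 0 := by
    intro h
    rw [Real.sin_eq_zero_iff] at h
    obtain ⟨j, hj⟩ := h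
    have key : (j:ℝ) * π * (2 * m + 1) = π * r := by
      rw [hj, hb, div_mul_cancel₀ _ (ne_of_gt hden)]
    have key2 : ((j:ℝ) * (2 * m + 1)) * π = (r:ℝ) * π := by linear_combination key
    have key3 : (j:ℝ) * (2 * m + 1) = (r:ℝ) :=
      mul_right_cancel₀ Real.pi_ne_zero key2
    have hz : j * (2 * (m:ℤ) + 1) = (r:ℤ) := by exact_mod_cast key3
    have hj1 : 1 ≤ j := by
      nlinarith [hz, (by exact_mod_cast hr1 : (1:ℤ) ≤ (r:ℤ)),
        (by exact_mod_cast hm : (1:ℤ) ≤ (m:ℤ))]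
    have hj2 : j ≤ 1 := by
      nlinarith [hz, (by exact_mod_cast hr2 : (r:ℤ) ≤ 4*(m:ℤ)+1),
        (by exact_mod_cast hm : (1:ℤ) ≤ (m:ℤ))]
    have hj0 : j = 1 := le_antisymm hj2 hj1
    subst hj0
    have : (r:ℤ) = 2 * m + 1 := by linarith [hz]
    exact hr3 (by exact_mod_cast this)
  have hcb : Real.cos b ≠ 0 := by
    intro h
    rw [Real.cos_eq_zero_iff] at h
    obtain ⟨j, hj⟩ := h
    have key : (2 * (j:ℝ) + 1) * π / 2 * (2 * m + 1) = π * r := by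
      rw [← hj, hb, div_mul_cancel₀ _ (ne_of_gt hden)]
    have key2 : (((2*j+1) * (2 * (m:ℝ) + 1))) * π = ((2*r:ℝ)) * π := by
      linear_combination 2 * key
    have key3 : (2*(j:ℝ)+1) * (2 * m + 1) = (2*r:ℝ) :=
      mul_right_cancel₀ Real.pi_ne_zero key2
    have hz : (2*j+1) * (2 * (m:ℤ) + 1) = 2*(r:ℤ) := by exact_mod_cast key3
    have hz2 : 4*(j*(m:ℤ)) + 2*j + 2*m + 1 = 2*r := by linear_combination hz
    omega
  -- real-level preliminaries
  have hc2b : Real.cos (2*b) = 1 - 2 * Real.sin b ^ 2 := by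
    rw [Real.cos_two_mul']
    linear_combination Real.sin_sq_add_cos_sq b
  have hω' : ω = ((1 - 2 * Real.sin b ^ 2 : ℝ) : ℂ)
      + ((2 * Real.sin b * Real.cos b : ℝ) : ℂ) * Complex.I := by
    rw [hω]
    have harg : 2 * (π:ℂ) * Complex.I * (r:ℕ) / (2 * (m:ℂ) + 1)
        = ((2*b : ℝ) : ℂ) * Complex.I := by
      rw [hb]; push_cast; field_simp
    rw [harg, Complex.exp_mul_I, ← Complex.ofReal_cos, ← Complex.ofReal_sin,
      hc2b, Real.sin_two_mul]
  have hcsR : Real.sin a * Real.cos b * ((4*(m:ℝ)+2) * cs)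
      = Real.cos a * Real.sin b - Real.sin a * Real.cos b * r := by
    rw [hcs, Real.cot_eq_cos_div_sin, Real.tan_eq_sin_div_cos]
    have h42 : (4*(m:ℝ)+2) ≠ 0 := by positivity
    field_simp
  have hPR : Real.sin b ^ 2 + Real.cos b ^ 2 = 1 := Real.sin_sq_add_cos_sq b
  -- rewrite cot in the goal, then abstract the trig values
  rw [Real.cot_eq_cos_div_sin]
  set s1 : ℝ := Real.sin a with hs1
  set c1 : ℝ := Real.cos a with hc1
  set s2 : ℝ := Real.sin b with hs2
  set c2 : ℝ := Real.cos b with hc2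
  clear_value s1 c1 s2 c2
  clear hcs hc2b hω hb ha hr3 hr2 hr1 hm
  -- complex-level work
  have hP : ((s2 : ℝ) : ℂ) ^ 2 + ((c2 : ℝ) : ℂ) ^ 2 = 1 := by exact_mod_cast hPR
  set E : ℂ := ((c2 : ℝ) : ℂ) + ((s2 : ℝ) : ℂ) * Complex.I with hE_def
  have hω1 : ω - 1 = 2 * ((s2 : ℝ) : ℂ) * Complex.I * E := by
    rw [hω', hE_def]
    simp only [Complex.ofReal_sub, Complex.ofReal_one, Complex.ofReal_mul,
      Complex.ofReal_pow, Complex.ofReal_ofNat]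
    linear_combination (-2*((s2 : ℝ) : ℂ)^2) * Complex.I_sq
  have hω2 : ω + 1 = 2 * ((c2 : ℝ) : ℂ) * E := by
    rw [hω', hE_def]
    simp only [Complex.ofReal_sub, Complex.ofReal_one, Complex.ofReal_mul,
      Complex.ofReal_pow, Complex.ofReal_ofNat]
    linear_combination (-2:ℂ) * hP
  have hE : E ≠ 0 := by
    intro h
    exact hcb (by simpa [hE_def] using congrArg Complex.re h)
  have hsa' : ((s1 : ℝ) : ℂ) ≠ 0 := Complex.ofReal_ne_zero.mpr hsa
  have hsb' : ((s2 : ℝ) : ℂ) ≠ 0 := Complex.ofReal_ne_zero.mpr hsb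
  have hcb' : ((c2 : ℝ) : ℂ) ≠ 0 := Complex.ofReal_ne_zero.mpr hcb
  have hcsC : ((s1 : ℝ) : ℂ) * ((c2 : ℝ) : ℂ) * ((4*(m:ℂ)+2) * (cs:ℂ))
      = ((c1 : ℝ) : ℂ) * ((s2 : ℝ) : ℂ) - ((s1 : ℝ) : ℂ) * ((c2 : ℝ) : ℂ) * (r:ℂ) := by
    exact_mod_cast hcsR
  have hA : (ω - 1) * ((c1 : ℝ) : ℂ)
        - Complex.I * (ω + 1) * ((s1 : ℝ) : ℂ) * ((k : ℂ) * (4 * (m:ℂ) + 2) + (r:ℂ))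
      = -2 * Complex.I * E * ((4*(m:ℂ)+2) * ((c2 : ℝ) : ℂ) * ((s1 : ℝ) : ℂ))
          * ((k : ℂ) - (cs : ℂ)) := by
    rw [hω1, hω2]
    linear_combination (-(2*Complex.I*E)) * hcsC
  have hB : (ω + 1) * ((s1 : ℝ) : ℂ) * ((4 * (m:ℂ) + 2) * ((n : ℂ) - (k:ℂ)) - (r:ℂ))
        - Complex.I * (ω - 1) * ((c1 : ℝ) : ℂ)
      = 2 * E * ((4*(m:ℂ)+2) * ((c2 : ℝ) : ℂ) * ((s1 : ℝ) : ℂ))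
          * ((n : ℂ) - (k : ℂ) + (cs : ℂ)) := by
    rw [hω1, hω2]
    linear_combination (-(2*E)) * hcsC
      + (-(2*E*((s2 : ℝ) : ℂ)*((c1 : ℝ) : ℂ))) * Complex.I_sq
  have hsq : (2 * ((s2 : ℝ) : ℂ) * Complex.I * E)^2
      = -4 * ((s2 : ℝ) : ℂ)^2 * E^2 := by
    linear_combination (4*((s2 : ℝ) : ℂ)^2*E^2) * Complex.I_sq
  have hc' : c = (2*(m:ℂ)+1) / (((s1 : ℝ) : ℂ) * ((s2 : ℝ) : ℂ)^2 * E^2) := by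
    rw [hc, hω1, hsq]
    rw [div_eq_div_iff (by exact mul_ne_zero (mul_ne_zero (by norm_num) (pow_ne_zero 2 hsb')) (pow_ne_zero 2 hE))
      (mul_ne_zero (mul_ne_zero hsa' (pow_ne_zero 2 hsb')) (pow_ne_zero 2 hE))]
    field_simp
  rw [hc', hA, hB]
  simp only [Complex.ofReal_div]
  field_simp
  ring
end
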